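/- Let G be an irreducible Artin–Tits group of spherical type, x_G the special element with λ its axis projection, v a vertex of 𝒞_AL(G) and λ₀ = λ(v). Then: (a) for every j ≥ 1, x_G^j is a prefix of the distinguished representative of x_G^{−λ₀+j} · v; (b) for every j ≥ 2, (∂x_G)^{j−1} is a prefix of the distinguished representative of x_G^{−λ₀−j} · v. -/

import Mathlib

/-- A finite-type Garside structure on a group `G`. -/
structure GarsideStructure (G : Type*) [Group G] where
  /-- the submonoid of positive elements -/
  P : Submonoid G
  /-- the Garside element -/
  Δ : G
  delta_pos : Δ ∈ P
  pos_antisymm : ∀ x : G, x ∈ P → x⁻¹ ∈ P → x = 1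
  /-- gcd for the prefix order -/
  wedge : G → G → G
  /-- lcm for the prefix order -/
  vee : G → G → G
  wedge_le_left : ∀ x y, (wedge x y)⁻¹ * x ∈ P
  wedge_le_right : ∀ x y, (wedge x y)⁻¹ * y ∈ P
  le_wedge : ∀ x y z, z⁻¹ * x ∈ P → z⁻¹ * y ∈ P → z⁻¹ * wedge x y ∈ P
  left_le_vee : ∀ x y, x⁻¹ * vee x y ∈ P
  right_le_vee : ∀ x y, y⁻¹ * vee x y ∈ P
  vee_le : ∀ x y z, x⁻¹ * z ∈ P → y⁻¹ * z ∈ P → (vee x y)⁻¹ * z ∈ P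
  /-- gcd for the suffix order -/
  rwedge : G → G → G
  /-- lcm for the suffix order -/
  rvee : G → G → G
  rwedge_le_left : ∀ x y, x * (rwedge x y)⁻¹ ∈ P
  rwedge_le_right : ∀ x y, y * (rwedge x y)⁻¹ ∈ P
  le_rwedge : ∀ x y z, x * z⁻¹ ∈ P → y * z⁻¹ ∈ P → rwedge x y * z⁻¹ ∈ P
  left_le_rvee : ∀ x y, rvee x y * x⁻¹ ∈ P
  right_le_rvee : ∀ x y, rvee x y * y⁻¹ ∈ P
  rvee_le : ∀ x y z, z * x⁻¹ ∈ P → z * y⁻¹ ∈ P → z * (rvee x y)⁻¹ ∈ P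
  /-- the set of simple elements is finite -/
  simples_finite : {s : G | s ∈ P ∧ s⁻¹ * Δ ∈ P}.Finite
  /-- the simple elements generate the group -/
  simples_generate : Subgroup.closure {s : G | s ∈ P ∧ s⁻¹ * Δ ∈ P} = ⊤
  /-- conjugation by `Δ` preserves `P` -/
  conj_delta : ∀ x : G, x ∈ P ↔ Δ⁻¹ * x * Δ ∈ P
  /-- `P` is noetherian -/
  noetherian : ∀ x ∈ P, x ≠ 1 →
    ∃ N : ℕ, ∀ l : List G, (∀ a ∈ l, a ∈ P ∧ a ≠ 1) → l.prod = x → l.length ≤ N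

namespace GarsideStructure

variable {G : Type*} [Group G] (g : GarsideStructure G)

/-- the prefix order -/
def le (x y : G) : Prop := x⁻¹ * y ∈ g.P

/-- the suffix order: `rle x y` means `x ≽ y`, i.e. `y` is a suffix of `x` -/
def rle (x y : G) : Prop := x * y⁻¹ ∈ g.P

/-- `IsInf x k` : `k` is the infimum of `x`, `max {j : Δ^j ≼ x}` -/
def IsInf (x : G) (k : ℤ) : Prop := g.le (g.Δ ^ k) x ∧ ∀ j : ℤ, g.le (g.Δ ^ j) x → j ≤ k

/-- `IsSup x k` : `k` is the supremum of `x`, `min {j : x ≼ Δ^j}` -/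
def IsSup (x : G) (k : ℤ) : Prop := g.le x (g.Δ ^ k) ∧ ∀ j : ℤ, g.le x (g.Δ ^ j) → k ≤ j

/-- an element of a Garside group is absorbable -/
def Absorbable (y : G) : Prop :=
  (g.IsInf y 0 ∨ g.IsSup y 0) ∧
  ∃ (x : G) (i s : ℤ), g.IsInf x i ∧ g.IsSup x s ∧ g.IsInf (x * y) i ∧ g.IsSup (x * y) s

/-- simple elements: positive prefixes of `Δ` -/
def Simple (s : G) : Prop := s ∈ g.P ∧ g.le s g.Δ

/-- atoms: minimal nontrivial positive elements -/
def Atom (a : G) : Prop := a ∈ g.P ∧ a ≠ 1 ∧ ∀ u v : G, u ∈ g.P → v ∈ g.P → u * v = a → u = 1 ∨ v = 1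

/-- `(s,t)` is left-weighted: `∂s ∧ t = 1` -/
def LeftWeighted (s t : G) : Prop :=
  g.Simple s ∧ g.Simple t ∧ g.wedge (s⁻¹ * g.Δ) t = 1

/-- `(s,t)` is right-weighted: `s ∧^Lsh ∂⁻¹t = 1` -/
def RightWeighted (s t : G) : Prop :=
  g.Simple s ∧ g.Simple t ∧ g.rwedge s (g.Δ * t⁻¹) = 1

/-- `l` is the left normal form (of the element `l.prod`, which has infimum `0`) -/
def IsLNF (l : List G) : Prop :=
  (∀ s ∈ l, g.Simple s ∧ s ≠ 1) ∧ l.Chain' g.LeftWeighted ∧ ∀ h ∈ l.head?, h ≠ g.Δ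

/-- `l` is the right normal form, written in product order (`u = s'_r ⋯ s'_1` corresponds
to the list `[s'_r, …, s'_1]`); the last pair condition says `s'_1 ≠ Δ`. -/
def IsRNF (l : List G) : Prop :=
  (∀ s ∈ l, g.Simple s ∧ s ≠ 1) ∧ l.Chain' g.RightWeighted ∧ ∀ h ∈ l.getLast?, h ≠ g.Δ

/-- the vertex set of the additional length graph: left cosets `gΔ^ℤ` -/
abbrev ALVertex := G ⧸ Subgroup.zpowers g.Δ

/-- one coset can be reached from the other by multiplying the distinguished
representative by a nontrivial proper simple element or by an absorbable element -/
def ALStep (v w : G ⧸ Subgroup.zpowers g.Δ) : Prop :=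
  ∃ d : G, g.IsInf d 0 ∧ (d : G ⧸ Subgroup.zpowers g.Δ) = v ∧
    ((∃ s : G, g.Simple s ∧ s ≠ 1 ∧ s ≠ g.Δ ∧ ((d * s : G) : G ⧸ Subgroup.zpowers g.Δ) = w) ∨
     (∃ y : G, g.Absorbable y ∧ ((d * y : G) : G ⧸ Subgroup.zpowers g.Δ) = w))

/-- the additional length graph -/
def ALGraph : SimpleGraph (G ⧸ Subgroup.zpowers g.Δ) where
  Adj v w := v ≠ w ∧ (g.ALStep v w ∨ g.ALStep w v)
  symm := by constructor; intro v w h; exact ⟨Ne.symm h.1, h.2.symm⟩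
  loopless := by constructor; intro v h; exact h.1 rfl

end GarsideStructure

section Artin

/-- the alternating word `iji⋯` of length `m` in the free group -/
def braidWord {B : Type*} (i j : B) : ℕ → FreeGroup B
  | 0 => 1
  | n + 1 => FreeGroup.of i * braidWord j i n

/-- the braid relations associated to a Coxeter matrix -/
def artinRelationsSet {B : Type*} (M : CoxeterMatrix B) : Set (FreeGroup B) :=
  {r | ∃ i j : B, i ≠ j ∧ r = braidWord i j (M i j) * (braidWord j i (M i j))⁻¹}

/-- the Artin–Tits group associated to a Coxeter matrix -/
abbrev ArtinGroup {B : Type*} (M : CoxeterMatrix B) : Type _ :=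
  PresentedGroup (artinRelationsSet M)

/-- the Coxeter diagram: vertices are the generators, edges join `i ≠ j` with `m_{ij} ≥ 3`
(where `0` encodes `∞`) -/
def coxeterDiagram {B : Type*} (M : CoxeterMatrix B) : SimpleGraph B where
  Adj i j := i ≠ j ∧ M i j ≠ 2
  symm := by constructor; intro i j h; exact ⟨h.1.symm, by rw [M.symmetric]; exact h.2⟩
  loopless := by constructor; intro i h; exact h.1 rfl

/-- an Artin–Tits group is irreducible if its Coxeter diagram is connected -/
def CoxeterMatrix.IsIrreducible {B : Type*} (M : CoxeterMatrix B) : Prop :=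
  (coxeterDiagram M).Connected

/-- an Artin–Tits group is of spherical type if the associated Coxeter group is finite -/
def CoxeterMatrix.IsSpherical {B : Type*} (M : CoxeterMatrix B) : Prop :=
  Finite M.Group

/-- the Coxeter diagram has at least one edge (this excludes free abelian groups) -/
def CoxeterMatrix.HasEdge {B : Type*} (M : CoxeterMatrix B) : Prop :=
  ∃ i j : B, i ≠ j ∧ 3 ≤ M i j

/-- `gs` is the classical Garside structure on the Artin–Tits group of `M`: the positive
monoid is generated by the standard generators, and `Δ` is their least common multiple
with respect to the prefix order. -/
structure IsClassicalGarside {B : Type*} (M : CoxeterMatrix B)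
    (gs : GarsideStructure (ArtinGroup M)) : Prop where
  pos_eq : gs.P = Submonoid.closure (Set.range fun i => (PresentedGroup.of i : ArtinGroup M))
  le_delta : ∀ i : B, gs.le (PresentedGroup.of i) gs.Δ
  delta_min : ∀ d : ArtinGroup M, d ∈ gs.P →
    (∀ i : B, gs.le (PresentedGroup.of i) d) → gs.le gs.Δ d

/-- the special element `x_G` of Proposition (Lox), together with its normal form data -/
structure GarsideStructure.SpecialElement {G : Type*} [Group G] (g : GarsideStructure G) where
  /-- the element itself -/
  x : G
  /-- the atom appearing as first and last normal form factor -/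
  a : G
  /-- the atom whose complements appear as consecutive factors -/
  b : G
  /-- the common left and right normal form of `x` -/
  l : List G
  inf_zero : g.IsInf x 0
  atom_a : g.Atom a
  atom_b : g.Atom b
  lnf : g.IsLNF l
  rnf : g.IsRNF l
  prod_eq : l.prod = x
  nonempty : l ≠ []
  head_a : l.head? = some a
  last_a : l.getLast? = some a
  /-- the first and last factors are the only ones consisting of a single atom -/
  interior_not_atom : ∀ s ∈ (l.drop 1).dropLast, ¬ g.Atom s
  /-- rigidity: the pair `(φ(x), ι(x)) = (a, a)` is left-weighted -/
  rigid : g.LeftWeighted a a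
  /-- two consecutive factors are `b⁻¹Δ` and `τ(b⁻¹)Δ` -/
  consecutive : ∃ l₁ l₂ : List G,
    l = l₁ ++ [b⁻¹ * g.Δ, (g.Δ⁻¹ * b⁻¹ * g.Δ) * g.Δ] ++ l₂
  /-- `sup(x)` is a multiple of `o(G)`, i.e. `Δ^{sup x}` is central -/
  delta_pow_central : g.Δ ^ (l.length : ℤ) ∈ Subgroup.center G

/-- `lam` is the projection `λ(v) = −max{k : x ⋠ ` distinguished rep of `x^k·v}` of the
vertex `v` to the axis of `x`. -/
def GarsideStructure.IsAxisProj {G : Type*} [Group G] (g : GarsideStructure G) (x : G)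
    (v : G ⧸ Subgroup.zpowers g.Δ) (lam : ℤ) : Prop :=
  (∃ d : G, g.IsInf d 0 ∧ (d : G ⧸ Subgroup.zpowers g.Δ) = x ^ (-lam) • v ∧ ¬ g.le x d) ∧
  ∀ k : ℤ, (∃ d : G, g.IsInf d 0 ∧ (d : G ⧸ Subgroup.zpowers g.Δ) = x ^ k • v ∧ ¬ g.le x d) →
    k ≤ -lam

/-- the vertices of the preferred path starting at the vertex of `d`, with edge labels `L` -/
def GarsideStructure.pathVerts {G : Type*} [Group G] (g : GarsideStructure G) (d : G)
    (L : List G) : List (G ⧸ Subgroup.zpowers g.Δ) :=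
  (List.range (L.length + 1)).map fun i => ((d * (L.take i).prod : G) : G ⧸ Subgroup.zpowers g.Δ)

end Artin


section AxisProofAux

namespace GarsideStructure

variable {G : Type*} [Group G] (g : GarsideStructure G)

lemma le_defn {x y : G} : g.le x y ↔ x⁻¹ * y ∈ g.P := Iff.rfl
lemma rle_defn {x y : G} : g.rle x y ↔ x * y⁻¹ ∈ g.P := Iff.rfl

lemma le_refl' (x : G) : g.le x x := by
  show x⁻¹ * x ∈ g.P
  rw [inv_mul_cancel]; exact g.P.one_mem

lemma le_trans' {x y z : G} (h1 : g.le x y) (h2 : g.le y z) : g.le x z := by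
  have h := g.P.mul_mem h1 h2
  have e : (x⁻¹ * y) * (y⁻¹ * z) = x⁻¹ * z := by group
  rw [e] at h; exact h

lemma le_antisymm' {x y : G} (h1 : g.le x y) (h2 : g.le y x) : x = y := by
  have h2' : (x⁻¹ * y)⁻¹ ∈ g.P := by
    have e : (x⁻¹ * y)⁻¹ = y⁻¹ * x := by group
    rw [e]; exact h2
  have := g.pos_antisymm _ h1 h2'
  exact inv_mul_eq_one.mp this

lemma rle_trans' {x y z : G} (h1 : g.rle x y) (h2 : g.rle y z) : g.rle x z := by
  have h := g.P.mul_mem h1 h2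
  have e : (x * y⁻¹) * (y * z⁻¹) = x * z⁻¹ := by group
  rw [e] at h; exact h

lemma rle_antisymm' {x y : G} (h1 : g.rle x y) (h2 : g.rle y x) : x = y := by
  have h2' : (x * y⁻¹)⁻¹ ∈ g.P := by
    have e : (x * y⁻¹)⁻¹ = y * x⁻¹ := by group
    rw [e]; exact h2
  have := g.pos_antisymm _ h1 h2'
  exact mul_inv_eq_one.mp this

lemma one_le_iff {x : G} : g.le 1 x ↔ x ∈ g.P := by
  show (1:G)⁻¹ * x ∈ g.P ↔ x ∈ g.P
  rw [inv_one, one_mul]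

/-- conjugation by `Δ` the other way -/
lemma conj_delta' (z : G) : z ∈ g.P ↔ g.Δ * z * g.Δ⁻¹ ∈ g.P := by
  have h := g.conj_delta (g.Δ * z * g.Δ⁻¹)
  have e : g.Δ⁻¹ * (g.Δ * z * g.Δ⁻¹) * g.Δ = z := by group
  rw [e] at h; exact h.symm

/-- conjugation by arbitrary powers of `Δ` preserves positivity -/
lemma conj_zpow (k : ℤ) (z : G) : z ∈ g.P ↔ g.Δ ^ (-k) * z * g.Δ ^ k ∈ g.P := by
  induction k using Int.induction_on with
  | zero => simp
  | succ n ih =>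
      rw [ih, g.conj_delta (g.Δ ^ (-(n:ℤ)) * z * g.Δ ^ (n:ℤ))]
      have e : g.Δ⁻¹ * (g.Δ ^ (-(n:ℤ)) * z * g.Δ ^ (n:ℤ)) * g.Δ
          = g.Δ ^ (-((n:ℤ)+1)) * z * g.Δ ^ ((n:ℤ)+1) := by group
      rw [e]
  | pred n ih =>
      rw [ih, g.conj_delta' (g.Δ ^ (-(-(n:ℤ))) * z * g.Δ ^ (-(n:ℤ)))]
      have e : g.Δ * (g.Δ ^ (-(-(n:ℤ))) * z * g.Δ ^ (-(n:ℤ))) * g.Δ⁻¹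
          = g.Δ ^ (-(-(n:ℤ)-1)) * z * g.Δ ^ (-(n:ℤ)-1) := by group
      rw [e]

lemma delta_zpow_mem {k : ℤ} (hk : 0 ≤ k) : g.Δ ^ k ∈ g.P := by
  lift k to ℕ using hk
  rw [zpow_natCast]
  exact pow_mem g.delta_pos k

lemma le_delta_zpow {m n : ℤ} (h : m ≤ n) : g.le (g.Δ ^ m) (g.Δ ^ n) := by
  show (g.Δ ^ m)⁻¹ * g.Δ ^ n ∈ g.P
  have e : (g.Δ ^ m)⁻¹ * g.Δ ^ n = g.Δ ^ (n - m) := by group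
  rw [e]; exact g.delta_zpow_mem (by omega)

lemma le_mul_left_iff {x y : G} (w : G) : g.le (w * x) (w * y) ↔ g.le x y := by
  show (w * x)⁻¹ * (w * y) ∈ g.P ↔ x⁻¹ * y ∈ g.P
  have e : (w * x)⁻¹ * (w * y) = x⁻¹ * y := by group
  rw [e]


/-- Key lemma: a simple element dividing a product divides `a·(Δ ∧ b)`. -/
lemma lemmaA {s A B : G} (hs : g.Simple s) (hA : A ∈ g.P) (hB : B ∈ g.P)
    (h : g.le s (A * B)) : g.le s (A * g.wedge g.Δ B) := by
  set J := g.vee A s with hJ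
  have hsJ : g.le s J := g.right_le_vee A s
  have hAJ : A⁻¹ * J ∈ g.P := g.left_le_vee A s
  have hJAB : g.le J (A * B) := by
    refine g.vee_le A s (A * B) ?_ h
    have e : A⁻¹ * (A * B) = B := by group
    show A⁻¹ * (A * B) ∈ g.P; rw [e]; exact hB
  have hJAD : g.le J (A * g.Δ) := by
    refine g.vee_le A s (A * g.Δ) ?_ ?_
    · have e : A⁻¹ * (A * g.Δ) = g.Δ := by group
      show A⁻¹ * (A * g.Δ) ∈ g.P; rw [e]; exact g.delta_pos
    · refine g.le_trans' hs.2 ?_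
      show g.Δ⁻¹ * (A * g.Δ) ∈ g.P
      have e : g.Δ⁻¹ * (A * g.Δ) = g.Δ⁻¹ * A * g.Δ := by group
      rw [e]; exact (g.conj_delta A).mp hA
  have hcB : g.le (A⁻¹ * J) B := by
    show (A⁻¹ * J)⁻¹ * B ∈ g.P
    have e : (A⁻¹ * J)⁻¹ * B = J⁻¹ * (A * B) := by group
    rw [e]; exact hJAB
  have hcD : g.le (A⁻¹ * J) g.Δ := by
    show (A⁻¹ * J)⁻¹ * g.Δ ∈ g.P
    have e : (A⁻¹ * J)⁻¹ * g.Δ = J⁻¹ * (A * g.Δ) := by group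
    rw [e]; exact hJAD
  have hcw : g.le (A⁻¹ * J) (g.wedge g.Δ B) := g.le_wedge _ _ _ hcD hcB
  refine g.le_trans' hsJ ?_
  show J⁻¹ * (A * g.wedge g.Δ B) ∈ g.P
  have e : J⁻¹ * (A * g.wedge g.Δ B) = (A⁻¹ * J)⁻¹ * g.wedge g.Δ B := by group
  rw [e]; exact hcw

lemma wedge_mem {y z : G} (hy : y ∈ g.P) (hz : z ∈ g.P) : g.wedge y z ∈ g.P := by
  have h := g.le_wedge y z 1 (by simpa using hy) (by simpa using hz)
  simpa using h

/-- mirror of `lemmaA` for the suffix order -/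
lemma mirror_lemmaA {S A B : G} (hSD : g.rle g.Δ S) (hA : A ∈ g.P) (hB : B ∈ g.P)
    (h : g.rle (A * B) S) : g.rle (g.rwedge A g.Δ * B) S := by
  set J := g.rvee S B with hJ
  have hJS : g.rle J S := g.left_le_rvee S B
  have hJB : J * B⁻¹ ∈ g.P := g.right_le_rvee S B
  have hABJ : g.rle (A * B) J := by
    refine g.rvee_le S B (A * B) h ?_
    have e : (A * B) * B⁻¹ = A := by group
    show (A * B) * B⁻¹ ∈ g.P; rw [e]; exact hA
  have hDBJ : g.rle (g.Δ * B) J := by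
    refine g.rvee_le S B (g.Δ * B) ?_ ?_
    · refine g.rle_trans' ?_ hSD
      show (g.Δ * B) * g.Δ⁻¹ ∈ g.P
      have e : (g.Δ * B) * g.Δ⁻¹ = g.Δ * B * g.Δ⁻¹ := by group
      rw [e]; exact (g.conj_delta' B).mp hB
    · have e : (g.Δ * B) * B⁻¹ = g.Δ := by group
      show (g.Δ * B) * B⁻¹ ∈ g.P; rw [e]; exact g.delta_pos
  have hcD : g.rle g.Δ (J * B⁻¹) := by
    show g.Δ * (J * B⁻¹)⁻¹ ∈ g.P
    have e : g.Δ * (J * B⁻¹)⁻¹ = (g.Δ * B) * J⁻¹ := by group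
    rw [e]; exact hDBJ
  have hcA : g.rle A (J * B⁻¹) := by
    show A * (J * B⁻¹)⁻¹ ∈ g.P
    have e : A * (J * B⁻¹)⁻¹ = (A * B) * J⁻¹ := by group
    rw [e]; exact hABJ
  have hcw : g.rwedge A g.Δ * (J * B⁻¹)⁻¹ ∈ g.P := g.le_rwedge A g.Δ _ hcA hcD
  show (g.rwedge A g.Δ * B) * S⁻¹ ∈ g.P
  have e : (g.rwedge A g.Δ * B) * S⁻¹ = (g.rwedge A g.Δ * (J * B⁻¹)⁻¹) * (J * S⁻¹) := by group
  rw [e]; exact g.P.mul_mem hcw hJS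

lemma rwedge_mem {y z : G} (hy : y ∈ g.P) (hz : z ∈ g.P) : g.rwedge y z ∈ g.P := by
  have h := g.le_rwedge y z 1 (by simpa using hy) (by simpa using hz)
  simpa using h

lemma rwedge_comm (y z : G) : g.rwedge y z = g.rwedge z y := by
  refine g.rle_antisymm' ?_ ?_
  · exact g.le_rwedge y z _ (g.rwedge_le_right z y) (g.rwedge_le_left z y)
  · exact g.le_rwedge z y _ (g.rwedge_le_right y z) (g.rwedge_le_left y z)

lemma rwedge_conj (u v : G) :
    g.rwedge (g.Δ * u * g.Δ⁻¹) (g.Δ * v * g.Δ⁻¹) = g.Δ * g.rwedge u v * g.Δ⁻¹ := by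
  refine g.rle_antisymm' ?_ ?_
  · -- rwedge (φu) (φv) ⊒ φ(rwedge u v), i.e. rwedge(φu,φv) * (φ rw)⁻¹ ∈ P: `le_rwedge`
    refine g.le_rwedge _ _ _ ?_ ?_
    · have e : (g.Δ * u * g.Δ⁻¹) * (g.Δ * g.rwedge u v * g.Δ⁻¹)⁻¹
          = g.Δ * (u * (g.rwedge u v)⁻¹) * g.Δ⁻¹ := by group
      rw [e]; exact (g.conj_delta' _).mp (g.rwedge_le_left u v)
    · have e : (g.Δ * v * g.Δ⁻¹) * (g.Δ * g.rwedge u v * g.Δ⁻¹)⁻¹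
          = g.Δ * (v * (g.rwedge u v)⁻¹) * g.Δ⁻¹ := by group
      rw [e]; exact (g.conj_delta' _).mp (g.rwedge_le_right u v)
  · -- φ(rwedge u v) ⊒ rwedge(φu, φv)
    set W := g.rwedge (g.Δ * u * g.Δ⁻¹) (g.Δ * v * g.Δ⁻¹) with hW
    have h1 : u * (g.Δ⁻¹ * W * g.Δ)⁻¹ ∈ g.P := by
      rw [g.conj_delta' (u * (g.Δ⁻¹ * W * g.Δ)⁻¹)]
      have e : g.Δ * (u * (g.Δ⁻¹ * W * g.Δ)⁻¹) * g.Δ⁻¹ = (g.Δ * u * g.Δ⁻¹) * W⁻¹ := by group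
      rw [e]; exact g.rwedge_le_left _ _
    have h2 : v * (g.Δ⁻¹ * W * g.Δ)⁻¹ ∈ g.P := by
      rw [g.conj_delta' (v * (g.Δ⁻¹ * W * g.Δ)⁻¹)]
      have e : g.Δ * (v * (g.Δ⁻¹ * W * g.Δ)⁻¹) * g.Δ⁻¹ = (g.Δ * v * g.Δ⁻¹) * W⁻¹ := by group
      rw [e]; exact g.rwedge_le_right _ _
    have h3 := g.le_rwedge u v _ h1 h2
    show (g.Δ * g.rwedge u v * g.Δ⁻¹) * W⁻¹ ∈ g.P
    rw [g.conj_delta ((g.Δ * g.rwedge u v * g.Δ⁻¹) * W⁻¹)]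
    have e : g.Δ⁻¹ * ((g.Δ * g.rwedge u v * g.Δ⁻¹) * W⁻¹) * g.Δ
        = g.rwedge u v * (g.Δ⁻¹ * W * g.Δ)⁻¹ := by group
    rw [e]; exact h3

/-- mirror head lemma -/
lemma mirror_head {A B : G} (hA : A ∈ g.P) (hB : B ∈ g.P) :
    g.rwedge (A * B) g.Δ = g.rwedge (g.rwedge A g.Δ * B) g.Δ := by
  refine g.rle_antisymm' ?_ ?_
  · refine g.le_rwedge _ _ _ ?_ (g.rwedge_le_right (g.rwedge A g.Δ * B) g.Δ)
    refine g.rle_trans' ?_ (g.rwedge_le_left (g.rwedge A g.Δ * B) g.Δ)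
    show (A * B) * (g.rwedge A g.Δ * B)⁻¹ ∈ g.P
    have e : (A * B) * (g.rwedge A g.Δ * B)⁻¹ = A * (g.rwedge A g.Δ)⁻¹ := by group
    rw [e]; exact g.rwedge_le_left A g.Δ
  · refine g.le_rwedge _ _ _ ?_ (g.rwedge_le_right (A * B) g.Δ)
    exact g.mirror_lemmaA (g.rwedge_le_right (A*B) g.Δ) hA hB (g.rwedge_le_left (A*B) g.Δ)

/-- mirror pair lemma: the suffix gcd with `Δ` of a right-weighted pair is the second factor -/
lemma mirror_pair {s t : G} (h : g.RightWeighted s t) : g.rwedge (s * t) g.Δ = t := by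
  obtain ⟨hs, ht, hw⟩ := h
  set W := g.rwedge (s * t) g.Δ with hWdef
  have htD : g.Δ * t⁻¹ ∈ g.P := by
    have := ht.2
    show g.Δ * t⁻¹ ∈ g.P
    rw [g.conj_delta (g.Δ * t⁻¹)]
    have e : g.Δ⁻¹ * (g.Δ * t⁻¹) * g.Δ = t⁻¹ * g.Δ := by group
    rw [e]; exact ht.2
  have hWt : W * t⁻¹ ∈ g.P := by
    refine g.le_rwedge _ _ _ ?_ htD
    have e : (s * t) * t⁻¹ = s := by group
    show (s*t) * t⁻¹ ∈ g.P; rw [e]; exact hs.1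
  have hc1 : s * (W * t⁻¹)⁻¹ ∈ g.P := by
    have e : s * (W * t⁻¹)⁻¹ = (s * t) * W⁻¹ := by group
    rw [e]; exact g.rwedge_le_left _ _
  have hc2 : (g.Δ * t⁻¹) * (W * t⁻¹)⁻¹ ∈ g.P := by
    have e : (g.Δ * t⁻¹) * (W * t⁻¹)⁻¹ = g.Δ * W⁻¹ := by group
    rw [e]; exact g.rwedge_le_right _ _
  have h3 := g.le_rwedge s (g.Δ * t⁻¹) _ hc1 hc2
  rw [hw, one_mul] at h3
  have : W * t⁻¹ = 1 := g.pos_antisymm _ hWt h3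
  exact mul_inv_eq_one.mp this

lemma prod_mem {L : List G} (h : ∀ s ∈ L, g.Simple s) : L.prod ∈ g.P := by
  induction L with
  | nil => simpa using g.P.one_mem
  | cons s T ih =>
      rw [List.prod_cons]
      exact g.P.mul_mem (h s (by simp)).1 (ih (fun z hz => h z (by simp [hz])))

/-- mirror head theorem: the suffix gcd with `Δ` of a right normal form is its last factor -/
lemma rnf_rwedge (L : List G) : ∀ ζ : G, (∀ s ∈ L, g.Simple s) → L.Chain' g.RightWeighted →
    L.getLast? = some ζ → g.rwedge L.prod g.Δ = ζ := by
  induction L using List.reverseRecOn with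
  | nil => intro ζ _ _ hl; simp at hl
  | append_singleton M ζ' ih =>
      intro ζ hs hc hl
      rw [List.getLast?_concat] at hl
      injection hl with hl'
      subst hl'
      have hζ : g.Simple ζ' := hs ζ' (by simp)
      have hζD : g.Δ * ζ'⁻¹ ∈ g.P := by
        rw [g.conj_delta (g.Δ * ζ'⁻¹)]
        have e : g.Δ⁻¹ * (g.Δ * ζ'⁻¹) * g.Δ = ζ'⁻¹ * g.Δ := by group
        rw [e]; exact hζ.2
      rcases eq_or_ne M [] with rfl | hM
      · simp only [List.nil_append, List.prod_cons, List.prod_nil, mul_one]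
        refine g.rle_antisymm' ?_ (g.rwedge_le_left ζ' g.Δ)
        refine g.le_rwedge _ _ _ ?_ hζD
        show ζ' * ζ'⁻¹ ∈ g.P
        rw [mul_inv_cancel]; exact g.P.one_mem
      · have hMs : ∀ s ∈ M, g.Simple s := fun s hsm => hs s (by simp [hsm])
        have hMc : M.Chain' g.RightWeighted := (List.isChain_append.mp hc).1
        obtain ⟨ξ, hξ⟩ := Option.isSome_iff_exists.mp (List.getLast?_isSome.mpr hM)
        have hrw : g.RightWeighted ξ ζ' := by
          have h3 := (List.isChain_append.mp hc).2.2
          exact h3 ξ hξ ζ' (by simp)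
        have hMP : M.prod ∈ g.P := g.prod_mem hMs
        calc g.rwedge (M ++ [ζ']).prod g.Δ
            = g.rwedge (M.prod * ζ') g.Δ := by
              rw [List.prod_append, List.prod_cons, List.prod_nil, mul_one]
          _ = g.rwedge (g.rwedge M.prod g.Δ * ζ') g.Δ := g.mirror_head hMP hζ.1
          _ = g.rwedge (ξ * ζ') g.Δ := by rw [ih ξ hMs hMc hξ]
          _ = ζ' := g.mirror_pair hrw

end GarsideStructure

/-- the right normal form of `∂x = x⁻¹Δ^r` built from the right normal form of `x` -/
def GarsideStructure.hatList {G : Type*} [Group G] (g : GarsideStructure G) : List G → List G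
  | [] => []
  | s :: rest => (GarsideStructure.hatList g rest).map (fun z => g.Δ * z * g.Δ⁻¹) ++ [g.Δ * s⁻¹]

namespace GarsideStructure

variable {G : Type*} [Group G] (g : GarsideStructure G)

lemma prod_map_conj (c : G) (L : List G) :
    (L.map (fun z => c * z * c⁻¹)).prod = c * L.prod * c⁻¹ := by
  induction L with
  | nil => simp
  | cons s T ih =>
      simp only [List.map_cons, List.prod_cons, ih]
      group

lemma hatList_prod (L : List G) : (g.hatList L).prod = g.Δ ^ L.length * L.prod⁻¹ := by
  induction L with
  | nil => simp [hatList]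
  | cons s T ih =>
      show ((g.hatList T).map (fun z => g.Δ * z * g.Δ⁻¹) ++ [g.Δ * s⁻¹]).prod = _
      rw [List.prod_append, prod_map_conj, ih]
      simp only [List.prod_cons, List.prod_nil, mul_one, List.length_cons]
      rw [pow_succ']
      group

lemma hatList_getLast? (s : G) (rest : List G) :
    (g.hatList (s :: rest)).getLast? = some (g.Δ * s⁻¹) := by
  show ((g.hatList rest).map (fun z => g.Δ * z * g.Δ⁻¹) ++ [g.Δ * s⁻¹]).getLast? = _
  rw [List.getLast?_concat]

lemma simple_conj {u : G} (h : g.Simple u) : g.Simple (g.Δ * u * g.Δ⁻¹) := by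
  constructor
  · exact (g.conj_delta' u).mp h.1
  · show (g.Δ * u * g.Δ⁻¹)⁻¹ * g.Δ ∈ g.P
    have e : (g.Δ * u * g.Δ⁻¹)⁻¹ * g.Δ = g.Δ * (u⁻¹ * g.Δ) * g.Δ⁻¹ := by group
    rw [e]; exact (g.conj_delta' _).mp h.2

lemma delta_inv_simple {s : G} (h : g.Simple s) : g.Simple (g.Δ * s⁻¹) := by
  constructor
  · have : g.Δ * (s⁻¹ * g.Δ) * g.Δ⁻¹ ∈ g.P := (g.conj_delta' _).mp h.2
    have e : g.Δ * (s⁻¹ * g.Δ) * g.Δ⁻¹ = g.Δ * s⁻¹ := by group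
    rwa [e] at this
  · show (g.Δ * s⁻¹)⁻¹ * g.Δ ∈ g.P
    have e : (g.Δ * s⁻¹)⁻¹ * g.Δ = s := by group
    rw [e]; exact h.1

lemma RW_conj {u v : G} (h : g.RightWeighted u v) :
    g.RightWeighted (g.Δ * u * g.Δ⁻¹) (g.Δ * v * g.Δ⁻¹) := by
  refine ⟨g.simple_conj h.1, g.simple_conj h.2.1, ?_⟩
  have e1 : g.Δ * (g.Δ * v * g.Δ⁻¹)⁻¹ = g.Δ * (g.Δ * v⁻¹) * g.Δ⁻¹ := by group
  rw [e1, g.rwedge_conj u (g.Δ * v⁻¹), h.2.2]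
  group

lemma hatList_simple (L : List G) (h : ∀ s ∈ L, g.Simple s) :
    ∀ z ∈ g.hatList L, g.Simple z := by
  induction L with
  | nil => intro z hz; simp [hatList] at hz
  | cons s T ih =>
      intro z hz
      have hz' : z ∈ (g.hatList T).map (fun z => g.Δ * z * g.Δ⁻¹) ++ [g.Δ * s⁻¹] := hz
      rw [List.mem_append] at hz'
      rcases hz' with hz' | hz'
      · rw [List.mem_map] at hz'
        obtain ⟨w, hw, rfl⟩ := hz'
        exact g.simple_conj (ih (fun u hu => h u (by simp [hu])) w hw)
      · simp at hz'
        subst hz'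
        exact g.delta_inv_simple (h s (by simp))

lemma hatList_chain (L : List G) (h : ∀ s ∈ L, g.Simple s) (hc : L.Chain' g.RightWeighted) :
    (g.hatList L).Chain' g.RightWeighted := by
  induction L with
  | nil => simp [hatList, List.Chain']
  | cons s T ih =>
      show ((g.hatList T).map (fun z => g.Δ * z * g.Δ⁻¹) ++ [g.Δ * s⁻¹]).Chain' g.RightWeighted
      rw [List.Chain', List.isChain_append]
      refine ⟨?_, by simp, ?_⟩
      · rw [List.isChain_map]
        exact List.IsChain.imp (fun a b hab => g.RW_conj hab)
          (ih (fun u hu => h u (by simp [hu])) (List.IsChain.tail hc))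
      · intro ξ hξ y hy
        simp only [List.head?_cons, Option.mem_def, Option.some.injEq] at hy
        subst hy
        -- ξ is the last element of the mapped hatList T; T must be nonempty
        cases T with
        | nil => simp [hatList] at hξ
        | cons t T' =>
            have hgl : ((g.hatList (t :: T')).map (fun z => g.Δ * z * g.Δ⁻¹)).getLast?
                = some (g.Δ * (g.Δ * t⁻¹) * g.Δ⁻¹) := by
              rw [List.getLast?_map, g.hatList_getLast?]
              rfl
            rw [hgl] at hξ
            simp only [Option.mem_def, Option.some.injEq] at hξ
            subst hξ
            have hst : g.RightWeighted s t := List.isChain_cons_cons.mp hc |>.1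
            refine ⟨g.simple_conj (g.delta_inv_simple (h t (by simp))),
              g.delta_inv_simple (h s (by simp)), ?_⟩
            have e1 : g.Δ * (g.Δ * s⁻¹)⁻¹ = g.Δ * s * g.Δ⁻¹ := by group
            rw [e1, g.rwedge_conj (g.Δ * t⁻¹) s]
            have e2 : g.rwedge (g.Δ * t⁻¹) s = 1 := by
              rw [g.rwedge_comm]; exact hst.2.2
            rw [e2]; group

lemma prod_le_delta_pow (L : List G) (h : ∀ s ∈ L, g.Simple s) :
    L.prod⁻¹ * g.Δ ^ (L.length : ℤ) ∈ g.P := by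
  induction L with
  | nil => simp [g.P.one_mem]
  | cons s T ih =>
      have hT := ih (fun z hz => h z (by simp [hz]))
      have hs : s⁻¹ * g.Δ ∈ g.P := (h s (by simp)).2
      have e : (s :: T).prod⁻¹ * g.Δ ^ (((s :: T).length : ℤ))
          = (T.prod⁻¹ * g.Δ ^ (T.length : ℤ))
            * (g.Δ ^ (-(T.length : ℤ)) * (s⁻¹ * g.Δ) * g.Δ ^ (T.length : ℤ)) := by
        simp only [List.prod_cons, List.length_cons]
        push_cast
        group
      rw [e]
      exact g.P.mul_mem hT (((g.conj_zpow (T.length : ℤ) (s⁻¹ * g.Δ))).mp hs)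

/-- `∂x = x⁻¹ Δ^r` -/
def hat (sp : g.SpecialElement) : G := sp.x⁻¹ * g.Δ ^ (sp.l.length : ℤ)

variable (sp : g.SpecialElement)

lemma sp_comm (z : G) : z * g.Δ ^ (sp.l.length : ℤ) = g.Δ ^ (sp.l.length : ℤ) * z :=
  Subgroup.mem_center_iff.mp sp.delta_pow_central z

lemma sp_simple {s : G} (hs : s ∈ sp.l) : g.Simple s := (sp.rnf.1 s hs).1

lemma sp_len_pos : 1 ≤ sp.l.length := List.length_pos_iff.mpr sp.nonempty

lemma sp_l_cons : sp.l = sp.a :: sp.l.tail := by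
  cases h : sp.l with
  | nil => exact absurd h sp.nonempty
  | cons s t =>
      have ha := sp.head_a
      rw [h] at ha
      simp only [List.head?_cons, Option.some.injEq] at ha
      subst ha
      simp

lemma sp_l_concat : sp.l = sp.l.dropLast ++ [sp.a] := by
  have h1 := List.dropLast_append_getLast (l := sp.l) sp.nonempty
  have h2 : sp.l.getLast sp.nonempty = sp.a := by
    have := sp.last_a
    rw [List.getLast?_eq_getLast sp.nonempty] at this
    injection this
  rw [← h2]
  exact h1.symm

lemma sp_a_simple : g.Simple sp.a := by
  refine g.sp_simple sp ?_
  rw [g.sp_l_cons sp]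
  exact List.mem_cons_self

lemma sp_x_mem : sp.x ∈ g.P := by
  rw [← sp.prod_eq]
  exact g.prod_mem (fun s hs => g.sp_simple sp hs)

lemma sp_hat_mem : g.hat sp ∈ g.P := by
  have := g.prod_le_delta_pow sp.l (fun s hs => g.sp_simple sp hs)
  rw [sp.prod_eq] at this
  exact this

lemma sp_x_decomp : sp.x = sp.l.dropLast.prod * sp.a := by
  conv_lhs => rw [← sp.prod_eq]
  conv_lhs => rw [g.sp_l_concat sp]
  rw [List.prod_append, List.prod_cons, List.prod_nil, mul_one]

lemma sp_dela_le_hat : g.le (sp.a⁻¹ * g.Δ) (g.hat sp) := by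
  set u := sp.l.dropLast.prod with hu
  have hlen : (sp.l.dropLast.length : ℤ) = (sp.l.length : ℤ) - 1 := by
    have h1 := g.sp_len_pos sp
    rw [List.length_dropLast]
    omega
  have hu' : u⁻¹ * g.Δ ^ ((sp.l.length : ℤ) - 1) ∈ g.P := by
    rw [← hlen]
    exact g.prod_le_delta_pow sp.l.dropLast (fun s hs => g.sp_simple sp (List.dropLast_subset _ hs))
  show (sp.a⁻¹ * g.Δ)⁻¹ * g.hat sp ∈ g.P
  rw [hat, g.sp_x_decomp sp, ← hu]
  have e : (sp.a⁻¹ * g.Δ)⁻¹ * ((u * sp.a)⁻¹ * g.Δ ^ (sp.l.length : ℤ))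
      = g.Δ⁻¹ * (u⁻¹ * g.Δ ^ ((sp.l.length : ℤ) - 1)) * g.Δ := by group
  rw [e]
  exact (g.conj_delta _).mp hu'

lemma sp_a_ne_one : sp.a ≠ 1 := sp.atom_a.2.1

lemma sp_not_a_le_dela : ¬ g.le sp.a (sp.a⁻¹ * g.Δ) := by
  intro h
  have h2 : sp.a⁻¹ * g.wedge (sp.a⁻¹ * g.Δ) sp.a ∈ g.P := by
    refine g.le_wedge _ _ _ h ?_
    rw [inv_mul_cancel]; exact g.P.one_mem
  rw [sp.rigid.2.2, mul_one] at h2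
  exact g.sp_a_ne_one sp (g.pos_antisymm _ sp.atom_a.1 h2)

lemma atom_conj {a' : G} (h : g.Atom a') : g.Atom (g.Δ⁻¹ * a' * g.Δ) := by
  refine ⟨(g.conj_delta a').mp h.1, ?_, ?_⟩
  · intro hc
    apply h.2.1
    have : g.Δ * (g.Δ⁻¹ * a' * g.Δ) * g.Δ⁻¹ = a' := by group
    rw [← this, hc]; group
  · intro u v hu hv huv
    have huv' : (g.Δ * u * g.Δ⁻¹) * (g.Δ * v * g.Δ⁻¹) = a' := by
      have : (g.Δ * u * g.Δ⁻¹) * (g.Δ * v * g.Δ⁻¹) = g.Δ * (u * v) * g.Δ⁻¹ := by group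
      rw [this, huv]; group
    rcases h.2.2 _ _ ((g.conj_delta' u).mp hu) ((g.conj_delta' v).mp hv) huv' with h1 | h1
    · left
      have : u = g.Δ⁻¹ * (g.Δ * u * g.Δ⁻¹) * g.Δ := by group
      rw [this, h1]; group
    · right
      have : v = g.Δ⁻¹ * (g.Δ * v * g.Δ⁻¹) * g.Δ := by group
      rw [this, h1]; group

lemma sp_vee_dela : g.vee sp.a (sp.a⁻¹ * g.Δ) = g.Δ := by
  set z := g.vee sp.a (sp.a⁻¹ * g.Δ) with hz
  have hzD : z⁻¹ * g.Δ ∈ g.P := by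
    refine g.vee_le _ _ _ (g.sp_a_simple sp).2 ?_
    have e : (sp.a⁻¹ * g.Δ)⁻¹ * g.Δ = g.Δ⁻¹ * sp.a * g.Δ := by group
    rw [e]; exact (g.conj_delta sp.a).mp sp.atom_a.1
  have h1 : (sp.a⁻¹ * g.Δ) * (z⁻¹ * g.Δ)⁻¹ ∈ g.P := by
    have e : (sp.a⁻¹ * g.Δ) * (z⁻¹ * g.Δ)⁻¹ = sp.a⁻¹ * z := by group
    rw [e]; exact g.left_le_vee _ _
  have h2 : (g.Δ⁻¹ * sp.a * g.Δ) * (z⁻¹ * g.Δ)⁻¹ ∈ g.P := by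
    have e : (g.Δ⁻¹ * sp.a * g.Δ) * (z⁻¹ * g.Δ)⁻¹ = (sp.a⁻¹ * g.Δ)⁻¹ * z := by group
    rw [e]; exact g.right_le_vee _ _
  have hatom := g.atom_conj sp.atom_a
  rcases hatom.2.2 _ _ h2 hzD (by group) with h3 | h3
  · -- Δ⁻¹aΔ * (z⁻¹Δ)⁻¹ = 1, so z⁻¹Δ = Δ⁻¹aΔ
    exfalso
    apply g.sp_not_a_le_dela sp
    have hw : z⁻¹ * g.Δ = g.Δ⁻¹ * sp.a * g.Δ := (mul_inv_eq_one.mp h3).symm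
    show sp.a⁻¹ * (sp.a⁻¹ * g.Δ) ∈ g.P
    have e : sp.a⁻¹ * (sp.a⁻¹ * g.Δ) = (sp.a⁻¹ * g.Δ) * (z⁻¹ * g.Δ)⁻¹ := by
      rw [hw]; group
    rw [e]; exact h1
  · -- z⁻¹Δ = 1
    have : z = g.Δ := by
      have := inv_mul_eq_one.mp h3
      rw [← this]
    rw [hz] at this
    exact this

lemma sp_rwedge_x : g.rwedge sp.x g.Δ = sp.a := by
  rw [← sp.prod_eq]
  exact g.rnf_rwedge sp.l sp.a (fun s hs => g.sp_simple sp hs) sp.rnf.2.1 sp.last_a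

lemma sp_comm_inv (z : G) :
    z * g.Δ ^ (-(sp.l.length : ℤ)) = g.Δ ^ (-(sp.l.length : ℤ)) * z := by
  have h := g.sp_comm sp z
  have e1 : z * g.Δ ^ (-(sp.l.length : ℤ))
      = g.Δ ^ (-(sp.l.length : ℤ)) * (g.Δ ^ (sp.l.length : ℤ) * z) * g.Δ ^ (-(sp.l.length : ℤ)) := by
    group
  rw [e1, ← h]
  group

/-- Lemma M': if `a ≼ w` and `Δ ≼ xw` then `Δ ≼ w`. -/
lemma sp_M' (w : G) (h1 : g.le sp.a w) (h2 : g.le g.Δ (sp.x * w)) : g.le g.Δ w := by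
  have hwP : w ∈ g.P := by
    have h := g.P.mul_mem sp.atom_a.1 h1
    have e : sp.a * (sp.a⁻¹ * w) = w := by group
    rwa [e] at h
  set t := g.wedge g.Δ w with ht
  have htP : t ∈ g.P := g.wedge_mem g.delta_pos hwP
  have htD : t⁻¹ * g.Δ ∈ g.P := g.wedge_le_left g.Δ w
  have hat : g.le sp.a t := g.le_wedge _ _ _ (g.sp_a_simple sp).2 h1
  have hxt : g.le g.Δ (sp.x * t) :=
    g.lemmaA ⟨g.delta_pos, g.le_refl' g.Δ⟩ (g.sp_x_mem sp) hwP h2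
  have hxu : sp.x * (g.Δ * t⁻¹)⁻¹ ∈ g.P := by
    have e : sp.x * (g.Δ * t⁻¹)⁻¹ = g.Δ * (g.Δ⁻¹ * (sp.x * t)) * g.Δ⁻¹ := by group
    rw [e]; exact (g.conj_delta' _).mp hxt
  have hDu : g.Δ * (g.Δ * t⁻¹)⁻¹ ∈ g.P := by
    have e : g.Δ * (g.Δ * t⁻¹)⁻¹ = g.Δ * t * g.Δ⁻¹ := by group
    rw [e]; exact (g.conj_delta' t).mp htP
  have huP : g.Δ * t⁻¹ ∈ g.P := by
    have h := (g.conj_delta' (t⁻¹ * g.Δ)).mp htD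
    have e : g.Δ * (t⁻¹ * g.Δ) * g.Δ⁻¹ = g.Δ * t⁻¹ := by group
    rwa [e] at h
  have hq : sp.a * (g.Δ * t⁻¹)⁻¹ ∈ g.P := by
    have h := g.le_rwedge sp.x g.Δ _ hxu hDu
    rwa [g.sp_rwedge_x sp] at h
  rcases sp.atom_a.2.2 _ _ hq huP (by group) with h3 | h3
  · exfalso
    have hua : g.Δ * t⁻¹ = sp.a := (mul_inv_eq_one.mp h3).symm
    have hta : t = sp.a⁻¹ * g.Δ := by
      rw [← hua]; group
    rw [hta] at hat
    exact g.sp_not_a_le_dela sp hat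
  · have hteq : g.Δ = t := mul_inv_eq_one.mp h3
    show g.Δ⁻¹ * w ∈ g.P
    rw [hteq]
    exact g.wedge_le_right g.Δ w

/-- Lemma GN: if `x ≼ tΔ^{r-1}` with `t` simple, then `a ≼ t`. -/
lemma sp_GN {t : G} (ht : g.Simple t) (h : g.le sp.x (t * g.Δ ^ ((sp.l.length : ℤ) - 1))) :
    g.le sp.a t := by
  set S := g.Δ ^ (1 - (sp.l.length : ℤ)) * t⁻¹ * g.Δ ^ (sp.l.length : ℤ) with hS
  have hDS : g.Δ * S⁻¹ ∈ g.P := by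
    have h1 := (g.conj_zpow ((sp.l.length : ℤ) - 1) t).mp ht.1
    have e : g.Δ ^ (-((sp.l.length : ℤ) - 1)) * t * g.Δ ^ ((sp.l.length : ℤ) - 1)
        = g.Δ * S⁻¹ := by rw [hS]; group
    rwa [e] at h1
  have hhS : g.hat sp * S⁻¹ ∈ g.P := by
    have e : g.hat sp * S⁻¹ = sp.x⁻¹ * (t * g.Δ ^ ((sp.l.length : ℤ) - 1)) := by
      rw [hat, hS]; group
    rw [e]; exact h
  have hprod : (g.hatList sp.l).prod = g.hat sp := by
    rw [g.hatList_prod, hat, ← sp.prod_eq, ← zpow_natCast g.Δ sp.l.length]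
    exact (g.sp_comm sp _).symm
  have hrw : g.rwedge (g.hatList sp.l).prod g.Δ = g.Δ * sp.a⁻¹ := by
    refine g.rnf_rwedge _ _ (g.hatList_simple sp.l (fun s hs => g.sp_simple sp hs))
      (g.hatList_chain sp.l (fun s hs => g.sp_simple sp hs) sp.rnf.2.1) ?_
    conv_lhs => rw [g.sp_l_cons sp]
    exact g.hatList_getLast? sp.a sp.l.tail
  have hSa : (g.Δ * sp.a⁻¹) * S⁻¹ ∈ g.P := by
    have h2 : (g.hatList sp.l).prod * S⁻¹ ∈ g.P := by rw [hprod]; exact hhS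
    have h3 := g.le_rwedge (g.hatList sp.l).prod g.Δ S h2 hDS
    rwa [hrw] at h3
  have e1 : (g.Δ * sp.a⁻¹) * S⁻¹
      = g.Δ * (sp.a⁻¹ * g.Δ ^ (-(sp.l.length : ℤ))) * t * g.Δ ^ ((sp.l.length : ℤ) - 1) := by
    rw [hS]; group
  rw [e1, g.sp_comm_inv sp sp.a⁻¹] at hSa
  have e2 : g.Δ * (g.Δ ^ (-(sp.l.length : ℤ)) * sp.a⁻¹) * t * g.Δ ^ ((sp.l.length : ℤ) - 1)
      = g.Δ ^ (-((sp.l.length : ℤ) - 1)) * (sp.a⁻¹ * t) * g.Δ ^ ((sp.l.length : ℤ) - 1) := by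
    group
  rw [e2] at hSa
  exact (g.conj_zpow ((sp.l.length : ℤ) - 1) (sp.a⁻¹ * t)).mpr hSa

/-- "cute fact", forward direction: `Δ ≼ ∂x·E → a ≼ E`. -/
lemma sp_cute {E : G} (hE : E ∈ g.P) (h : g.le g.Δ (g.hat sp * E)) : g.le sp.a E := by
  set t := g.wedge g.Δ E with ht
  have htP : t ∈ g.P := g.wedge_mem g.delta_pos hE
  have htD : t⁻¹ * g.Δ ∈ g.P := g.wedge_le_left g.Δ E
  have hxt : g.le g.Δ (g.hat sp * t) :=
    g.lemmaA ⟨g.delta_pos, g.le_refl' g.Δ⟩ (g.sp_hat_mem sp) hE h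
  have hconv : g.le sp.x (t * g.Δ ^ ((sp.l.length : ℤ) - 1)) := by
    show sp.x⁻¹ * (t * g.Δ ^ ((sp.l.length : ℤ) - 1)) ∈ g.P
    have h1 : g.Δ⁻¹ * (g.hat sp * t) ∈ g.P := hxt
    rw [hat] at h1
    rw [g.sp_comm sp sp.x⁻¹] at h1
    have h2 := (g.conj_zpow ((sp.l.length : ℤ) - 1) _).mp h1
    have e : g.Δ ^ (-((sp.l.length : ℤ) - 1)) * (g.Δ⁻¹ * (g.Δ ^ (sp.l.length : ℤ) * sp.x⁻¹ * t))
          * g.Δ ^ ((sp.l.length : ℤ) - 1)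
        = sp.x⁻¹ * (t * g.Δ ^ ((sp.l.length : ℤ) - 1)) := by group
    rwa [e] at h2
  have h4 := g.sp_GN sp ⟨htP, htD⟩ hconv
  exact g.le_trans' h4 (g.wedge_le_right g.Δ E)

/-- Claim I: `a ≼ ∂x·E → a ≼ E`. -/
lemma sp_claimI {E : G} (hE : E ∈ g.P) (h : g.le sp.a (g.hat sp * E)) : g.le sp.a E := by
  have h2 : g.le (sp.a⁻¹ * g.Δ) (g.hat sp * E) := by
    refine g.le_trans' (g.sp_dela_le_hat sp) ?_
    show (g.hat sp)⁻¹ * (g.hat sp * E) ∈ g.P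
    have e : (g.hat sp)⁻¹ * (g.hat sp * E) = E := by group
    rw [e]; exact hE
  have h3 := g.vee_le sp.a (sp.a⁻¹ * g.Δ) _ h h2
  rw [g.sp_vee_dela sp] at h3
  exact g.sp_cute sp hE h3

/-- Claim K: the base case of the descending chain. -/
lemma sp_claimK {e0 : G} (he0 : e0 ∈ g.P) {κ : ℤ}
    (hinf : g.IsInf (g.hat sp * e0) κ) (hκ : κ ≤ (sp.l.length : ℤ) - 1) :
    ¬ g.le sp.a (g.hat sp * e0 * g.Δ ^ (-κ)) := by
  intro h
  have h1 : g.le sp.a (sp.x⁻¹ * (e0 * g.Δ ^ ((sp.l.length : ℤ) - κ))) := by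
    show sp.a⁻¹ * (sp.x⁻¹ * (e0 * g.Δ ^ ((sp.l.length : ℤ) - κ))) ∈ g.P
    have h' : sp.a⁻¹ * (g.hat sp * e0 * g.Δ ^ (-κ)) ∈ g.P := h
    rw [hat] at h'
    have hc := g.sp_comm sp e0
    have e : sp.a⁻¹ * (sp.x⁻¹ * g.Δ ^ (sp.l.length : ℤ) * e0 * g.Δ ^ (-κ))
        = sp.a⁻¹ * (sp.x⁻¹ * ((g.Δ ^ (sp.l.length : ℤ) * e0) * g.Δ ^ (-κ))) := by group
    rw [e, ← hc] at h'
    have e2 : sp.a⁻¹ * (sp.x⁻¹ * (e0 * g.Δ ^ (sp.l.length : ℤ) * g.Δ ^ (-κ)))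
        = sp.a⁻¹ * (sp.x⁻¹ * (e0 * g.Δ ^ ((sp.l.length : ℤ) - κ))) := by group
    rwa [e2] at h'
  have h2 : g.le g.Δ (sp.x * (sp.x⁻¹ * (e0 * g.Δ ^ ((sp.l.length : ℤ) - κ)))) := by
    show g.Δ⁻¹ * (sp.x * (sp.x⁻¹ * (e0 * g.Δ ^ ((sp.l.length : ℤ) - κ)))) ∈ g.P
    have e : g.Δ⁻¹ * (sp.x * (sp.x⁻¹ * (e0 * g.Δ ^ ((sp.l.length : ℤ) - κ))))
        = (g.Δ⁻¹ * e0 * g.Δ) * g.Δ ^ ((sp.l.length : ℤ) - κ - 1) := by group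
    rw [e]
    exact g.P.mul_mem ((g.conj_delta e0).mp he0) (g.delta_zpow_mem (by omega))
  have h3 := g.sp_M' sp _ h1 h2
  have h4 : g.le (g.Δ ^ (κ + 1)) (g.hat sp * e0) := by
    show (g.Δ ^ (κ + 1))⁻¹ * (g.hat sp * e0) ∈ g.P
    have h3' : g.Δ⁻¹ * (sp.x⁻¹ * (e0 * g.Δ ^ ((sp.l.length : ℤ) - κ))) ∈ g.P := h3
    have h5 := (g.conj_zpow (-((sp.l.length : ℤ) - κ)) _).mp h3'
    have e : g.Δ ^ (-(-((sp.l.length : ℤ) - κ)))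
          * (g.Δ⁻¹ * (sp.x⁻¹ * (e0 * g.Δ ^ ((sp.l.length : ℤ) - κ))))
          * g.Δ ^ (-((sp.l.length : ℤ) - κ))
        = g.Δ ^ ((sp.l.length : ℤ) - κ - 1) * sp.x⁻¹ * e0 := by group
    rw [e] at h5
    have hcx := g.sp_comm sp sp.x⁻¹
    have e2 : (g.Δ ^ (κ + 1))⁻¹ * (g.hat sp * e0)
        = g.Δ ^ (-(κ + 1)) * ((sp.x⁻¹ * g.Δ ^ (sp.l.length : ℤ)) * e0) := by
      rw [hat]; group
    rw [e2, hcx]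
    have e3 : g.Δ ^ (-(κ + 1)) * ((g.Δ ^ (sp.l.length : ℤ) * sp.x⁻¹) * e0)
        = g.Δ ^ ((sp.l.length : ℤ) - κ - 1) * sp.x⁻¹ * e0 := by group
    rw [e3]; exact h5
  have := hinf.2 _ h4
  omega

lemma isInf_zero_mem {p : G} (h : g.IsInf p 0) : p ∈ g.P := by
  have h1 : (g.Δ ^ (0 : ℤ))⁻¹ * p ∈ g.P := h.1
  simpa using h1

lemma isInf_zero_of {p : G} (hp : p ∈ g.P) (hnd : ¬ g.le g.Δ p) : g.IsInf p 0 := by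
  constructor
  · show (g.Δ ^ (0 : ℤ))⁻¹ * p ∈ g.P
    simpa using hp
  · intro k hk
    by_contra hk'
    push_neg at hk'
    have h1 := g.le_trans' (g.le_delta_zpow (show (1 : ℤ) ≤ k by omega)) hk
    rw [zpow_one] at h1
    exact hnd h1

lemma isInf_unique {p : G} {k k' : ℤ} (h : g.IsInf p k) (h' : g.IsInf p k') : k = k' :=
  le_antisymm (h'.2 k h.1) (h.2 k' h'.1)

lemma isInf_shift {p : G} {κ : ℤ} (h : g.IsInf p κ) (j : ℤ) : g.IsInf (p * g.Δ ^ j) (κ + j) := by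
  constructor
  · show (g.Δ ^ (κ + j))⁻¹ * (p * g.Δ ^ j) ∈ g.P
    have h1 := (g.conj_zpow j ((g.Δ ^ κ)⁻¹ * p)).mp h.1
    have e : g.Δ ^ (-j) * ((g.Δ ^ κ)⁻¹ * p) * g.Δ ^ j = (g.Δ ^ (κ + j))⁻¹ * (p * g.Δ ^ j) := by
      group
    rwa [e] at h1
  · intro k hk
    have hk' : g.le (g.Δ ^ (k - j)) p := by
      show (g.Δ ^ (k - j))⁻¹ * p ∈ g.P
      have h1 := (g.conj_zpow (-j) ((g.Δ ^ k)⁻¹ * (p * g.Δ ^ j))).mp hk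
      have e : g.Δ ^ (-(-j)) * ((g.Δ ^ k)⁻¹ * (p * g.Δ ^ j)) * g.Δ ^ (-j)
          = (g.Δ ^ (k - j))⁻¹ * p := by group
      rwa [e] at h1
    have := h.2 _ hk'
    omega

lemma exists_inf (hΔ : g.Δ ≠ 1) {p : G} (hp : p ∈ g.P) : ∃ κ : ℤ, 0 ≤ κ ∧ g.IsInf p κ := by
  have h0 : g.le (g.Δ ^ (0 : ℤ)) p := by
    show (g.Δ ^ (0 : ℤ))⁻¹ * p ∈ g.P
    simpa using hp
  have hbdd : ∃ b : ℤ, ∀ k : ℤ, g.le (g.Δ ^ k) p → k ≤ b := by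
    rcases eq_or_ne p 1 with rfl | hp1
    · refine ⟨0, fun k hk => ?_⟩
      by_contra hk'
      push_neg at hk'
      have hk0 : (0 : ℤ) ≤ k := le_of_lt hk'
      have h1 : (g.Δ ^ k)⁻¹ ∈ g.P := by
        have h2 : (g.Δ ^ k)⁻¹ * 1 ∈ g.P := hk
        rwa [mul_one] at h2
      have h3 : g.Δ ^ k = 1 := g.pos_antisymm _ (g.delta_zpow_mem hk0) h1
      have h4 : g.Δ ^ (k - 1) = g.Δ⁻¹ := by
        rw [zpow_sub_one, h3, one_mul]
      have h5 : g.Δ⁻¹ ∈ g.P := h4 ▸ g.delta_zpow_mem (by omega)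
      exact hΔ (g.pos_antisymm _ g.delta_pos h5)
    · obtain ⟨N, hN⟩ := g.noetherian p hp hp1
      refine ⟨N, fun k hk => ?_⟩
      by_contra hk'
      push_neg at hk'
      have hk0 : (0 : ℤ) ≤ k := by omega
      have hcP : (g.Δ ^ k)⁻¹ * p ∈ g.P := hk
      rcases eq_or_ne ((g.Δ ^ k)⁻¹ * p) 1 with hc1 | hc1
      · have hpk : g.Δ ^ k = p := inv_mul_eq_one.mp hc1
        have hlen := hN (List.replicate k.toNat g.Δ)
          (fun z hz => by rw [List.eq_of_mem_replicate hz]; exact ⟨g.delta_pos, hΔ⟩)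
          (by rw [List.prod_replicate, ← hpk, ← zpow_natCast, Int.toNat_of_nonneg hk0])
        rw [List.length_replicate] at hlen
        omega
      · have hlen := hN (List.replicate k.toNat g.Δ ++ [(g.Δ ^ k)⁻¹ * p])
          (fun z hz => by
            rcases List.mem_append.mp hz with hz | hz
            · rw [List.eq_of_mem_replicate hz]; exact ⟨g.delta_pos, hΔ⟩
            · rw [List.mem_singleton.mp hz]; exact ⟨hcP, hc1⟩)
          (by
            rw [List.prod_append, List.prod_replicate, List.prod_cons, List.prod_nil, mul_one,
              ← zpow_natCast, Int.toNat_of_nonneg hk0]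
            group)
        rw [List.length_append, List.length_replicate, List.length_singleton] at hlen
        omega
  obtain ⟨b, hb⟩ := hbdd
  obtain ⟨κ, hκ1, hκ2⟩ := Int.exists_greatest_of_bdd ⟨b, fun z hz => hb z hz⟩ ⟨0, h0⟩
  exact ⟨κ, hκ2 0 h0, hκ1, hκ2⟩
end GarsideStructure
end AxisProofAux
/-- Lemma "L:Partial": for a vertex `v` with axis projection `λ₀`:
(a) for `j ≥ 1`, `x_G^j` is a prefix of the distinguished representative of `x_G^{−λ₀+j}·v`;
(b) for `j ≥ 2`, `(∂x_G)^{j−1}` is a prefix of the distinguished representative of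
`x_G^{−λ₀−j}·v`. -/
theorem artin_axis_projection_prefixes {B : Type*} (M : CoxeterMatrix B)
    (hirr : M.IsIrreducible) (hsph : M.IsSpherical) (hedge : M.HasEdge)
    (gs : GarsideStructure (ArtinGroup M)) (hcl : IsClassicalGarside M gs)
    (sp : gs.SpecialElement)
    (v : ArtinGroup M ⧸ Subgroup.zpowers gs.Δ) (lam : ℤ)
    (hlam : gs.IsAxisProj sp.x v lam) :
    (∀ j : ℤ, 1 ≤ j → ∀ d : ArtinGroup M, gs.IsInf d 0 →
        (d : ArtinGroup M ⧸ Subgroup.zpowers gs.Δ) = sp.x ^ (-lam + j) • v →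
        gs.le (sp.x ^ j) d) ∧
    (∀ j : ℤ, 2 ≤ j → ∀ d : ArtinGroup M, gs.IsInf d 0 →
        (d : ArtinGroup M ⧸ Subgroup.zpowers gs.Δ) = sp.x ^ (-lam - j) • v →
        gs.le ((sp.x⁻¹ * gs.Δ ^ (sp.l.length : ℤ)) ^ (j - 1)) d) := by
  obtain ⟨⟨d0, hd0inf, hd0coset, hd0nle⟩, hmax⟩ := hlam
  have hΔ1 : gs.Δ ≠ 1 := by
    intro h
    have h2 := (gs.sp_a_simple sp).2
    rw [h] at h2
    have h3 : sp.a⁻¹ ∈ gs.P := by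
      have h2' : sp.a⁻¹ * (1 : ArtinGroup M) ∈ gs.P := h2
      rwa [mul_one] at h2'
    exact gs.sp_a_ne_one sp (gs.pos_antisymm _ sp.atom_a.1 h3)
  constructor
  · -- part (a)
    refine Int.le_induction (m := 1)
      (motive := fun j _ => ∀ d : ArtinGroup M, gs.IsInf d 0 →
        (d : ArtinGroup M ⧸ Subgroup.zpowers gs.Δ) = sp.x ^ (-lam + j) • v →
        gs.le (sp.x ^ j) d) ?_ ?_
    · intro d hdinf hdcoset
      rw [zpow_one]
      by_contra hnle
      have := hmax (-lam + 1) ⟨d, hdinf, hdcoset, hnle⟩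
      omega
    · intro n hn ih d hdinf hdcoset
      have hxle : gs.le sp.x d := by
        by_contra hnle
        have := hmax (-lam + (n + 1)) ⟨d, hdinf, hdcoset, hnle⟩
        omega
      have hd'P : sp.x⁻¹ * d ∈ gs.P := hxle
      obtain ⟨κ, hκ0, hκinf⟩ := gs.exists_inf hΔ1 hd'P
      have heinf : gs.IsInf ((sp.x⁻¹ * d) * gs.Δ ^ (-κ)) 0 := by
        have h1 := gs.isInf_shift hκinf (-κ)
        have e : κ + -κ = 0 := by omega
        rwa [e] at h1
      have hecoset : (((sp.x⁻¹ * d) * gs.Δ ^ (-κ) : ArtinGroup M) :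
          ArtinGroup M ⧸ Subgroup.zpowers gs.Δ) = sp.x ^ (-lam + n) • v := by
        rw [QuotientGroup.mk_mul_of_mem _ (Subgroup.zpow_mem_zpowers _ _)]
        have h1 : ((sp.x⁻¹ * d : ArtinGroup M) : ArtinGroup M ⧸ Subgroup.zpowers gs.Δ)
            = sp.x⁻¹ • ((d : ArtinGroup M) : ArtinGroup M ⧸ Subgroup.zpowers gs.Δ) := rfl
        rw [h1, hdcoset, smul_smul]
        congr 1
        rw [← zpow_neg_one, ← zpow_add]
        congr 1
        omega
      have h2 := ih _ heinf hecoset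
      show (sp.x ^ (n + 1))⁻¹ * d ∈ gs.P
      have h3 := gs.P.mul_mem h2 (gs.delta_zpow_mem hκ0)
      have e : (sp.x ^ n)⁻¹ * ((sp.x⁻¹ * d) * gs.Δ ^ (-κ)) * gs.Δ ^ κ
          = (sp.x ^ (n + 1))⁻¹ * d := by group
      rwa [e] at h3
  · -- part (b)
    intro j hj d hdinf hdcoset
    have chain : ∀ n : ℕ, ∃ e : ArtinGroup M, gs.IsInf e 0 ∧
        ((e : ArtinGroup M) : ArtinGroup M ⧸ Subgroup.zpowers gs.Δ)
          = sp.x ^ (-lam - ((n : ℤ) + 1)) • v ∧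
        ¬ gs.le sp.a e ∧ gs.le ((gs.hat sp) ^ n) e := by
      intro n
      induction n with
      | zero =>
          have hd0P : d0 ∈ gs.P := gs.isInf_zero_mem hd0inf
          obtain ⟨κ, hκ0, hκinf⟩ := gs.exists_inf hΔ1 (gs.P.mul_mem (gs.sp_hat_mem sp) hd0P)
          have hκr : κ ≤ (sp.l.length : ℤ) - 1 := by
            by_contra hcon
            push_neg at hcon
            apply hd0nle
            have h1 : gs.le (gs.Δ ^ (sp.l.length : ℤ)) (gs.hat sp * d0) :=
              gs.le_trans' (gs.le_delta_zpow (by omega)) hκinf.1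
            show sp.x⁻¹ * d0 ∈ gs.P
            have h2 : (gs.Δ ^ (sp.l.length : ℤ))⁻¹ * (gs.hat sp * d0) ∈ gs.P := h1
            rw [GarsideStructure.hat, gs.sp_comm sp sp.x⁻¹] at h2
            have e2 : (gs.Δ ^ (sp.l.length : ℤ))⁻¹ * (gs.Δ ^ (sp.l.length : ℤ) * sp.x⁻¹ * d0)
                = sp.x⁻¹ * d0 := by group
            rwa [e2] at h2
          refine ⟨gs.hat sp * d0 * gs.Δ ^ (-κ), ?_, ?_, ?_, ?_⟩
          · have h1 := gs.isInf_shift hκinf (-κ)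
            have e : κ + -κ = 0 := by omega
            rwa [e] at h1
          · rw [QuotientGroup.mk_mul_of_mem _ (Subgroup.zpow_mem_zpowers _ _)]
            have e : gs.hat sp * d0 = (sp.x⁻¹ * d0) * gs.Δ ^ (sp.l.length : ℤ) := by
              rw [GarsideStructure.hat, gs.sp_comm sp sp.x⁻¹, mul_assoc,
                ← gs.sp_comm sp (sp.x⁻¹ * d0)]
            rw [e, QuotientGroup.mk_mul_of_mem _ (Subgroup.zpow_mem_zpowers _ _)]
            have h1 : ((sp.x⁻¹ * d0 : ArtinGroup M) : ArtinGroup M ⧸ Subgroup.zpowers gs.Δ)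
                = sp.x⁻¹ • ((d0 : ArtinGroup M) : ArtinGroup M ⧸ Subgroup.zpowers gs.Δ) := rfl
            rw [h1, hd0coset, smul_smul]
            congr 1
            rw [← zpow_neg_one, ← zpow_add]
            congr 1
            push_cast
            omega
          · exact gs.sp_claimK sp hd0P hκinf hκr
          · rw [pow_zero]
            have h1 := gs.isInf_shift hκinf (-κ)
            have e : κ + -κ = 0 := by omega
            rw [e] at h1
            show (1 : ArtinGroup M)⁻¹ * (gs.hat sp * d0 * gs.Δ ^ (-κ)) ∈ gs.P
            rw [inv_one, one_mul]
            exact gs.isInf_zero_mem h1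
      | succ n ihn =>
          obtain ⟨e, heinf, hecoset, hena, hepow⟩ := ihn
          have heP := gs.isInf_zero_mem heinf
          have hnΔ : ¬ gs.le gs.Δ (gs.hat sp * e) := fun h => hena (gs.sp_cute sp heP h)
          have h'inf : gs.IsInf (gs.hat sp * e) 0 :=
            gs.isInf_zero_of (gs.P.mul_mem (gs.sp_hat_mem sp) heP) hnΔ
          refine ⟨gs.hat sp * e, h'inf, ?_, fun h => hena (gs.sp_claimI sp heP h), ?_⟩
          · have e1 : gs.hat sp * e = (sp.x⁻¹ * e) * gs.Δ ^ (sp.l.length : ℤ) := by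
              rw [GarsideStructure.hat, gs.sp_comm sp sp.x⁻¹, mul_assoc,
                ← gs.sp_comm sp (sp.x⁻¹ * e)]
            rw [e1, QuotientGroup.mk_mul_of_mem _ (Subgroup.zpow_mem_zpowers _ _)]
            have h1 : ((sp.x⁻¹ * e : ArtinGroup M) : ArtinGroup M ⧸ Subgroup.zpowers gs.Δ)
                = sp.x⁻¹ • ((e : ArtinGroup M) : ArtinGroup M ⧸ Subgroup.zpowers gs.Δ) := rfl
            rw [h1, hecoset, smul_smul]
            congr 1
            rw [← zpow_neg_one, ← zpow_add]
            congr 1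
            push_cast
            omega
          · show ((gs.hat sp) ^ (n + 1))⁻¹ * (gs.hat sp * e) ∈ gs.P
            have h2 : ((gs.hat sp) ^ n)⁻¹ * e ∈ gs.P := hepow
            have ee : ((gs.hat sp) ^ (n + 1))⁻¹ * (gs.hat sp * e)
                = ((gs.hat sp) ^ n)⁻¹ * e := by
              rw [pow_succ']
              group
            rwa [ee]
    obtain ⟨e, heinf, hecoset, hena, hepow⟩ := chain (j - 1).toNat
    have hnz : (((j - 1).toNat : ℕ) : ℤ) = j - 1 := Int.toNat_of_nonneg (by omega)
    have hsame : ((d : ArtinGroup M) : ArtinGroup M ⧸ Subgroup.zpowers gs.Δ)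
        = ((e : ArtinGroup M) : ArtinGroup M ⧸ Subgroup.zpowers gs.Δ) := by
      rw [hdcoset, hecoset]
      congr 2
      omega
    have hde : d = e := by
      obtain ⟨k, hk⟩ := Subgroup.mem_zpowers_iff.mp (QuotientGroup.eq.mp hsame)
      have he2 : e = d * gs.Δ ^ k := by rw [hk]; group
      have h1 := gs.isInf_shift hdinf k
      rw [← he2, zero_add] at h1
      have hk0 : (0 : ℤ) = k := gs.isInf_unique heinf h1
      rw [he2, ← hk0]
      simp
    have hbase : (sp.x⁻¹ * gs.Δ ^ (sp.l.length : ℤ)) ^ (j - 1) = (gs.hat sp) ^ ((j-1).toNat) := by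
      show (gs.hat sp) ^ (j - 1) = (gs.hat sp) ^ ((j-1).toNat)
      conv_lhs => rw [← hnz]
      rw [zpow_natCast]
    rw [hbase, hde]
    exact hepow
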